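/- Let q ≥ 2, K ≥ 2, N ≥ t ≥ 0 be integers and γ ∈ ℝ with 0 < γ < 1. Suppose α^{(0)},…,α^{(K−1)} ∈ ℂ^{S_{q,N}} satisfy conditions (C1)–(C4) with parameter t, and set c_i = ∑_{n∈S_{q,N}} α^{(i)}_n δ_n in the q-mode Fock space. Then for all tuples r, r′ : Fin q → ℕ with |r|₁ ≤ t and |r′|₁ ≤ t: ⟨A_r c_i, A_{r′} c_j⟩ = 0 for all i ≠ j, and ⟨A_r c_i, A_{r′} c_i⟩ = ⟨A_r c_j, A_{r′} c_j⟩ for all i, j; i.e., the Knill–Laflamme conditions hold for the amplitude-damping error set, so the Fock state code with basis (c_i) corrects t amplitude-damping errors. -/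
import Mathlib


/-- The discrete simplex `S_{q,N}`: tuples of naturals of length `q` summing to `N`. -/
def simplex (q N : ℕ) : Finset (Fin q → ℕ) := Finset.Nat.antidiagonalTuple q N

/-- Multinomial coefficient `C(∑ n; n)` for a tuple of naturals. -/
def multinat {q : ℕ} (n : Fin q → ℕ) : ℕ := Nat.multinomial Finset.univ n

/-- Multinomial coefficient for an integer tuple: `0` if some entry is negative. -/
def multZ {q : ℕ} (n : Fin q → ℤ) : ℕ :=
  if ∀ i, 0 ≤ n i then Nat.multinomial Finset.univ (fun i => (n i).toNat) else 0

/-- The `q`-mode Fock space: complex-valued functions on occupation tuples `Fin q → ℕ`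
(the vectors appearing below are finitely supported). -/
abbrev Fock (q : ℕ) := (Fin q → ℕ) → ℂ

/-- The inner product `⟨u,v⟩ = ∑_n conj (u n) · v n` on (finitely supported elements of)
Fock space, as a finite sum over the support. -/
noncomputable def finner {q : ℕ} (u v : Fock q) : ℂ :=
  ∑ᶠ n : Fin q → ℕ, (starRingEnd ℂ) (u n) * v n

/-- The Fock basis state `|n⟩`. -/
noncomputable def fockδ {q : ℕ} (n : Fin q → ℕ) : Fock q :=
  fun m => if m = n then 1 else 0

/-- The amplitude-damping Kraus operator `A_r` with damping parameter `γ`: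
`A_r |n⟩ = (∏ i, (1−γ)^{(n i − r i)/2} γ^{r i / 2} C(n i, r i)^{1/2}) |n − r⟩` when
`r ≤ n` entrywise, and `A_r |n⟩ = 0` otherwise. -/
noncomputable def ampDamp {q : ℕ} (γ : ℝ) (r : Fin q → ℕ) (u : Fock q) : Fock q :=
  fun m =>
    (((∏ i, Real.sqrt ((1 - γ) ^ (m i) * γ ^ (r i) * (Nat.choose (m i + r i) (r i) : ℝ))) : ℝ) : ℂ) *
      u (fun i => m i + r i)

/-- The coefficient `C(N−t; n−e) / √(C(N;n)·C(N; n−e+f))` appearing in the error-correction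
conditions; it vanishes when `n − e` has a negative entry. -/
noncomputable def klCoeff {q : ℕ} (n e f : Fin q → ℕ) : ℝ :=
  (multZ (fun i => (n i : ℤ) - (e i : ℤ)) : ℝ) /
    Real.sqrt ((multinat n : ℝ) * (multinat (fun i => n i - e i + f i) : ℝ))

/-- Condition (C1): the rows of `α` are pairwise orthogonal. -/
def condC1 (q K N : ℕ) (α : Fin K → (Fin q → ℕ) → ℂ) : Prop :=
  ∀ i j : Fin K, i ≠ j → ∑ n ∈ simplex q N, (starRingEnd ℂ) (α i n) * α j n = 0

/-- Condition (C2): the rows of `α` have equal norms. -/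
def condC2 (q K N : ℕ) (α : Fin K → (Fin q → ℕ) → ℂ) : Prop :=
  ∀ i j : Fin K,
    ∑ n ∈ simplex q N, Complex.normSq (α i n) = ∑ n ∈ simplex q N, Complex.normSq (α j n)

/-- Condition (C3): Knill–Laflamme orthogonality condition. -/
def condC3 (q K N t : ℕ) (α : Fin K → (Fin q → ℕ) → ℂ) : Prop :=
  ∀ i j : Fin K, i ≠ j → ∀ e ∈ simplex q t, ∀ f ∈ simplex q t,
    ∑ n ∈ simplex q N,
      (starRingEnd ℂ) (α i n) * α j (fun k => n k - e k + f k) * ((klCoeff n e f : ℝ) : ℂ) = 0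

/-- Condition (C4): Knill–Laflamme non-deformation condition. -/
def condC4 (q K N t : ℕ) (α : Fin K → (Fin q → ℕ) → ℂ) : Prop :=
  ∀ i j : Fin K, i ≠ j → ∀ e ∈ simplex q t, ∀ f ∈ simplex q t,
    ∑ n ∈ simplex q N,
      ((starRingEnd ℂ) (α i n) * α i (fun k => n k - e k + f k) -
        (starRingEnd ℂ) (α j n) * α j (fun k => n k - e k + f k)) * ((klCoeff n e f : ℝ) : ℂ) = 0

/-- The `i`-th basis state of the Fock state code with coefficients `α`. -/
noncomputable def fockCode {q K : ℕ} (N : ℕ) (α : Fin K → (Fin q → ℕ) → ℂ) (i : Fin K) :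
    Fock q :=
  ∑ n ∈ simplex q N, α i n • fockδ n

lemma mem_simplex {q N : ℕ} {n : Fin q → ℕ} : n ∈ simplex q N ↔ ∑ i, n i = N :=
  Finset.Nat.mem_antidiagonalTuple

/-- Multinomial Vandermonde over `piAntidiag`. -/
lemma vand_pi {ι : Type*} [DecidableEq ι] (s : Finset ι) (m : ι → ℕ) :
    ∀ u : ℕ, ∑ d ∈ s.piAntidiag u, ∏ k ∈ s, (m k).choose (d k) = (∑ k ∈ s, m k).choose u := by
  induction s using Finset.cons_induction with
  | empty =>
    intro u
    rw [Finset.piAntidiag_empty]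
    cases u with
    | zero => simp
    | succ u => simp
  | cons i s hi ih =>
    intro u
    rw [Finset.piAntidiag_cons hi, Finset.sum_disjiUnion, Finset.sum_cons,
      Nat.add_choose_eq]
    refine Finset.sum_congr rfl ?_
    rintro ⟨a, b⟩ hab
    rw [Finset.sum_map]
    have : ∀ g ∈ s.piAntidiag b,
        ∏ k ∈ Finset.cons i s hi,
          (m k).choose ((addRightEmbedding
            (fun t => if t = i then a else 0) g) k)
        = (m i).choose a * ∏ k ∈ s, (m k).choose (g k) := by
      intro g hg
      rw [Finset.mem_piAntidiag] at hg
      have hgi : g i = 0 := by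
        by_contra h
        exact hi (hg.2 i h)
      rw [Finset.prod_cons]
      simp only [addRightEmbedding_apply, Pi.add_apply]
      congr 1
      · simp [hgi]
      · refine Finset.prod_congr rfl fun k hk => ?_
        have : k ≠ i := fun h => hi (h ▸ hk)
        simp [this]
    rw [Finset.sum_congr rfl this, ← Finset.mul_sum, ih b]

lemma vand_choose {q : ℕ} (m : Fin q → ℕ) (u : ℕ) :
    ∑ d ∈ simplex q u, ∏ k, (m k).choose (d k) = (∑ k, m k).choose u := by
  rw [simplex, ← Finset.piAntidiag_univ_fin_eq_antidiagonalTuple u q]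
  exact vand_pi Finset.univ m u

lemma prod_factorial_pos {q : ℕ} (m : Fin q → ℕ) : 0 < ∏ k, (m k).factorial :=
  Finset.prod_pos fun k _ => (m k).factorial_pos

/-- `∏ C(m+r, r) · multinat(m+r) = C(∑m+∑r, ∑r) · multinat r · multinat m`. -/
lemma key_prod_mult {q : ℕ} (m r : Fin q → ℕ) :
    (∏ k, (m k + r k).choose (r k)) * multinat (fun k => m k + r k)
      = (∑ k, m k + ∑ k, r k).choose (∑ k, r k) * multinat r * multinat m := by
  apply Nat.eq_of_mul_eq_mul_right
    (Nat.mul_pos (prod_factorial_pos r) (prod_factorial_pos m))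
  have h1 : ∀ k : Fin q, (m k + r k).choose (r k) * ((r k).factorial * (m k).factorial)
      = (m k + r k).factorial := by
    intro k
    have := Nat.choose_mul_factorial_mul_factorial (Nat.le_add_left (r k) (m k))
    simpa [Nat.add_sub_cancel, mul_assoc, mul_comm, mul_left_comm] using this
  calc (∏ k, (m k + r k).choose (r k)) * multinat (fun k => m k + r k)
      * ((∏ k, (r k).factorial) * ∏ k, (m k).factorial)
      = ((∏ k, (m k + r k).choose (r k) * ((r k).factorial * (m k).factorial))
          * multinat (fun k => m k + r k)) := by
        rw [Finset.prod_mul_distrib, Finset.prod_mul_distrib]; ring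
    _ = (∏ k, (m k + r k).factorial) * multinat (fun k => m k + r k) := by
        rw [Finset.prod_congr rfl fun k _ => h1 k]
    _ = (∑ k, (m k + r k)).factorial := Nat.multinomial_spec _ _
    _ = (∑ k, m k + ∑ k, r k).factorial := by rw [Finset.sum_add_distrib]
    _ = (∑ k, m k + ∑ k, r k).choose (∑ k, r k) * ((∑ k, r k).factorial
          * (∑ k, m k).factorial) := by
        have := Nat.choose_mul_factorial_mul_factorial
          (Nat.le_add_left (∑ k, r k) (∑ k, m k))
        rw [Nat.add_sub_cancel] at this
        rw [← this]; ring
    _ = (∑ k, m k + ∑ k, r k).choose (∑ k, r k)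
          * ((multinat r * ∏ k, (r k).factorial) * (multinat m * ∏ k, (m k).factorial)) := by
        rw [multinat, multinat, mul_comm (Nat.multinomial _ _), mul_comm (Nat.multinomial _ _),
          Nat.multinomial_spec, Nat.multinomial_spec]
    _ = _ := by ring

lemma multZ_eq_zero {q : ℕ} {m d : Fin q → ℕ} (h : ¬ ∀ k, d k ≤ m k) :
    multZ (fun k => (m k : ℤ) - d k) = 0 := by
  rw [multZ, if_neg]
  push_neg at h ⊢
  obtain ⟨k, hk⟩ := h
  exact ⟨k, by omega⟩

lemma multZ_eq_multinat {q : ℕ} {m d : Fin q → ℕ} (h : ∀ k, d k ≤ m k) :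
    multZ (fun k => (m k : ℤ) - d k) = multinat (fun k => m k - d k) := by
  rw [multZ, if_pos (fun k => by have := h k; omega), multinat]
  congr 1
  funext k
  omega

/-- Per-term factorial identity. -/
lemma per_d {q : ℕ} (m d : Fin q → ℕ) (u : ℕ) (hd : ∑ k, d k = u) :
    multinat d * multZ (fun k => (m k : ℤ) - d k) * ∏ k, (m k).factorial
      = u.factorial * (∑ k, m k - u).factorial * ∏ k, (m k).choose (d k) := by
  by_cases h : ∀ k, d k ≤ m k
  · rw [multZ_eq_multinat h]
    have hsum : ∑ k, (m k - d k) = ∑ k, m k - u := by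
      have : ∑ k, (m k - d k) + ∑ k, d k = ∑ k, m k := by
        rw [← Finset.sum_add_distrib]
        exact Finset.sum_congr rfl fun k _ => by have := h k; omega
      omega
    apply Nat.eq_of_mul_eq_mul_right
      (Nat.mul_pos (prod_factorial_pos d) (prod_factorial_pos (fun k => m k - d k)))
    calc multinat d * multinat (fun k => m k - d k) * (∏ k, (m k).factorial)
        * ((∏ k, (d k).factorial) * ∏ k, (m k - d k).factorial)
        = (multinat d * ∏ k, (d k).factorial)
            * ((multinat (fun k => m k - d k)) * ∏ k, (m k - d k).factorial)
            * ∏ k, (m k).factorial := by ring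
      _ = (∑ k, d k).factorial * (∑ k, (m k - d k)).factorial * ∏ k, (m k).factorial := by
          rw [multinat, multinat, mul_comm (Nat.multinomial _ _),
            mul_comm (Nat.multinomial _ _), Nat.multinomial_spec, Nat.multinomial_spec]
      _ = u.factorial * (∑ k, m k - u).factorial * ∏ k, (m k).factorial := by
          rw [hd, hsum]
      _ = u.factorial * (∑ k, m k - u).factorial
            * ∏ k, ((m k).choose (d k) * ((d k).factorial * (m k - d k).factorial)) := by
          congr 1
          refine Finset.prod_congr rfl fun k _ => ?_
          have := Nat.choose_mul_factorial_mul_factorial (h k)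
          rw [← this]; ring
      _ = _ := by rw [Finset.prod_mul_distrib, Finset.prod_mul_distrib]; ring
  · rw [multZ_eq_zero h]
    push_neg at h
    obtain ⟨k, hk⟩ := h
    have : ∏ k, (m k).choose (d k) = 0 :=
      Finset.prod_eq_zero (Finset.mem_univ k) (Nat.choose_eq_zero_of_lt hk)
    rw [this]
    ring

/-- Multinomial Vandermonde convolution. -/
lemma vand2 {q : ℕ} (m : Fin q → ℕ) (u : ℕ) (hu : u ≤ ∑ k, m k) :
    ∑ d ∈ simplex q u, multinat d * multZ (fun k => (m k : ℤ) - d k) = multinat m := by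
  apply Nat.eq_of_mul_eq_mul_right (prod_factorial_pos m)
  rw [Finset.sum_mul]
  calc ∑ d ∈ simplex q u, multinat d * multZ (fun k => (m k : ℤ) - d k) * ∏ k, (m k).factorial
      = ∑ d ∈ simplex q u, u.factorial * (∑ k, m k - u).factorial * ∏ k, (m k).choose (d k) := by
        refine Finset.sum_congr rfl fun d hd => per_d m d u (mem_simplex.mp hd)
    _ = u.factorial * (∑ k, m k - u).factorial * ∑ d ∈ simplex q u, ∏ k, (m k).choose (d k) := by
        rw [Finset.mul_sum]
    _ = u.factorial * (∑ k, m k - u).factorial * (∑ k, m k).choose u := by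
        rw [vand_choose]
    _ = (∑ k, m k).factorial := by
        have := Nat.choose_mul_factorial_mul_factorial hu
        rw [← this]; ring
    _ = multinat m * ∏ k, (m k).factorial := by
        rw [multinat, ← Nat.multinomial_spec]; ring

lemma sqrt_prod {ι : Type*} (s : Finset ι) (f : ι → ℝ) (h : ∀ i ∈ s, 0 ≤ f i) :
    ∏ i ∈ s, Real.sqrt (f i) = Real.sqrt (∏ i ∈ s, f i) := by
  induction s using Finset.cons_induction with
  | empty => simp
  | cons i s hi ih =>
    rw [Finset.prod_cons, Finset.prod_cons, ih (fun j hj => h j (Finset.mem_cons_of_mem hj)),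
      Real.sqrt_mul (h i (Finset.mem_cons_self i s))]

lemma multinat_pos {q : ℕ} (m : Fin q → ℕ) : 0 < multinat m := Nat.multinomial_pos _ _

lemma pfac_sqrt {q : ℕ} {γ : ℝ} (hγ0 : 0 < γ) (hγ1 : γ < 1) (m r : Fin q → ℕ) :
    (∏ k, Real.sqrt ((1-γ)^(m k) * γ^(r k) * ((m k + r k).choose (r k) : ℝ)))
      = Real.sqrt ((1-γ)^(∑ k, m k) * γ^(∑ k, r k)
          * ∏ k, ((m k + r k).choose (r k) : ℝ)) := by
  rw [sqrt_prod]
  · congr 1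
    rw [Finset.prod_mul_distrib, Finset.prod_mul_distrib,
      Finset.prod_pow_eq_pow_sum, Finset.prod_pow_eq_pow_sum]
  · intro k _
    have h1 : (0:ℝ) ≤ 1 - γ := by linarith
    positivity

lemma pfac_mul {q : ℕ} {γ : ℝ} (hγ0 : 0 < γ) (hγ1 : γ < 1) (m r r' : Fin q → ℕ)
    (hS : ∑ k, r' k = ∑ k, r k) :
    (∏ k, Real.sqrt ((1-γ)^(m k) * γ^(r k) * ((m k + r k).choose (r k) : ℝ)))
      * (∏ k, Real.sqrt ((1-γ)^(m k) * γ^(r' k) * ((m k + r' k).choose (r' k) : ℝ)))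
    = γ^(∑ k, r k) * (1-γ)^(∑ k, m k)
        * ((∑ k, m k + ∑ k, r k).choose (∑ k, r k) : ℝ)
        * Real.sqrt ((multinat r : ℝ) * (multinat r' : ℝ)) * (multinat m : ℝ)
        / Real.sqrt ((multinat (fun k => m k + r k) : ℝ)
            * (multinat (fun k => m k + r' k) : ℝ)) := by
  have h1γ : (0:ℝ) ≤ 1 - γ := by linarith
  set M := ∑ k, m k
  set S := ∑ k, r k
  set A : ℝ := ∏ k, ((m k + r k).choose (r k) : ℝ) with hA
  set B : ℝ := ∏ k, ((m k + r' k).choose (r' k) : ℝ) with hB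
  have hA0 : 0 ≤ A := Finset.prod_nonneg fun k _ => Nat.cast_nonneg _
  have hB0 : 0 ≤ B := Finset.prod_nonneg fun k _ => Nat.cast_nonneg _
  set C : ℝ := ((M + S).choose S : ℝ) with hC
  set P1 : ℝ := (multinat (fun k => m k + r k) : ℝ) with hP1
  set P2 : ℝ := (multinat (fun k => m k + r' k) : ℝ) with hP2
  have hP1pos : 0 < P1 := by rw [hP1]; exact_mod_cast multinat_pos _
  have hP2pos : 0 < P2 := by rw [hP2]; exact_mod_cast multinat_pos _
  have keyA : A * P1 = C * (multinat r : ℝ) * (multinat m : ℝ) := by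
    rw [hA, hP1, hC, ← Nat.cast_prod, ← Nat.cast_mul]
    exact_mod_cast congrArg (Nat.cast (R := ℝ)) (key_prod_mult m r)
  have keyB : B * P2 = C * (multinat r' : ℝ) * (multinat m : ℝ) := by
    rw [hB, hP2, hC, ← Nat.cast_prod, ← Nat.cast_mul, ← hS]
    exact_mod_cast congrArg (Nat.cast (R := ℝ)) (key_prod_mult m r')
  have hX0 : (0:ℝ) ≤ (1-γ)^M * γ^S * A :=
    mul_nonneg (mul_nonneg (pow_nonneg h1γ _) (pow_nonneg (le_of_lt hγ0) _)) hA0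
  rw [pfac_sqrt hγ0 hγ1 m r, pfac_sqrt hγ0 hγ1 m r', ← hA, ← hB, ← Real.sqrt_mul hX0]
  have hXY : (1-γ)^M * γ^S * A * ((1-γ)^M * γ^(∑ k, r' k) * B)
      = ((1-γ)^M * γ^S)^2 * (A * B) := by rw [hS]; ring
  have hg0 : (0:ℝ) ≤ (1-γ)^M * γ^S :=
    mul_nonneg (pow_nonneg h1γ _) (pow_nonneg (le_of_lt hγ0) _)
  rw [hXY, Real.sqrt_mul (sq_nonneg _), Real.sqrt_sq hg0]
  have hsAB : Real.sqrt (A * B) = C * (multinat m : ℝ)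
      * Real.sqrt ((multinat r : ℝ) * (multinat r' : ℝ)) / Real.sqrt (P1 * P2) := by
    have hABP : A * B * (P1 * P2)
        = (C * (multinat m : ℝ))^2 * ((multinat r : ℝ) * (multinat r' : ℝ)) := by
      have : A * B * (P1 * P2) = (A * P1) * (B * P2) := by ring
      rw [this, keyA, keyB]; ring
    have hsP : (0:ℝ) < Real.sqrt (P1 * P2) := Real.sqrt_pos.mpr (mul_pos hP1pos hP2pos)
    have hCm : (0:ℝ) ≤ C * (multinat m : ℝ) :=
      mul_nonneg (Nat.cast_nonneg _) (Nat.cast_nonneg _)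
    rw [eq_div_iff (ne_of_gt hsP), ← Real.sqrt_mul (mul_nonneg hA0 hB0), hABP,
      Real.sqrt_mul (sq_nonneg _), Real.sqrt_sq hCm]
  rw [hsAB]
  ring

/-- if the coefficient vectors `α^{(0)},…,α^{(K−1)}` satisfy (C1)–(C4) with
parameter `t`, then the Fock state code with basis `c_i = ∑_{n ∈ S_{q,N}} α^{(i)}_n |n⟩`
satisfies the Knill–Laflamme conditions for the amplitude-damping error set: for all
`r, r'` with `|r|₁ ≤ t`, `|r'|₁ ≤ t`, `⟨A_r c_i, A_{r'} c_j⟩ = 0` for `i ≠ j` and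
`⟨A_r c_i, A_{r'} c_i⟩ = ⟨A_r c_j, A_{r'} c_j⟩` for all `i, j`; i.e., the code corrects
`t` amplitude-damping errors. -/
theorem fock_code_corrects_AD (q K N t : ℕ) (hq : 2 ≤ q) (hK : 2 ≤ K) (htN : t ≤ N)
    (γ : ℝ) (hγ0 : 0 < γ) (hγ1 : γ < 1)
    (α : Fin K → (Fin q → ℕ) → ℂ)
    (hC1 : condC1 q K N α) (hC2 : condC2 q K N α)
    (hC3 : condC3 q K N t α) (hC4 : condC4 q K N t α) :
    ∀ r r' : Fin q → ℕ, (∑ i, r i) ≤ t → (∑ i, r' i) ≤ t →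
      (∀ i j : Fin K, i ≠ j →
        finner (ampDamp γ r (fockCode N α i)) (ampDamp γ r' (fockCode N α j)) = 0) ∧
      (∀ i j : Fin K,
        finner (ampDamp γ r (fockCode N α i)) (ampDamp γ r' (fockCode N α i)) =
          finner (ampDamp γ r (fockCode N α j)) (ampDamp γ r' (fockCode N α j))) := by
  intro r r' hr hr'
  have code_apply : ∀ (i : Fin K) (v : Fin q → ℕ),
      fockCode N α i v = if v ∈ simplex q N then α i v else 0 := by
    intro i v
    show (∑ n ∈ simplex q N, α i n • fockδ n) v = _
    rw [Finset.sum_apply]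
    simp only [Pi.smul_apply, fockδ, smul_eq_mul, mul_ite, mul_one, mul_zero]
    exact Finset.sum_ite_eq (simplex q N) v (α i)
  set S := ∑ k, r k with hSdef
  set S' := ∑ k, r' k with hS'def
  have hSt : S ≤ t := hr
  have hSN : S ≤ N := le_trans hr htN
  -- reduce finner to a finite sum over simplex q (N - S)
  have key_supp : ∀ i j : Fin K,
      finner (ampDamp γ r (fockCode N α i)) (ampDamp γ r' (fockCode N α j))
        = ∑ m ∈ simplex q (N - S),
            (starRingEnd ℂ) (ampDamp γ r (fockCode N α i) m)
              * ampDamp γ r' (fockCode N α j) m := by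
    intro i j
    apply finsum_eq_sum_of_support_subset
    intro m hm
    simp only [Function.mem_support] at hm
    have h1 : fockCode N α i (fun k => m k + r k) ≠ 0 := by
      intro h0
      apply hm
      show (starRingEnd ℂ) (_ * fockCode N α i (fun k => m k + r k)) * _ = 0
      rw [h0, mul_zero, map_zero, zero_mul]
    have h2 : (fun k => m k + r k) ∈ simplex q N := by
      by_contra hc
      rw [code_apply i _, if_neg hc] at h1
      exact h1 rfl
    rw [mem_simplex] at h2
    rw [Finset.sum_add_distrib] at h2
    rw [Finset.mem_coe, mem_simplex]
    omega
  by_cases hS' : S' = S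
  swap
  · -- unequal weights: everything vanishes
    have hzero : ∀ i j : Fin K,
        finner (ampDamp γ r (fockCode N α i)) (ampDamp γ r' (fockCode N α j)) = 0 := by
      intro i j
      rw [key_supp i j]
      apply Finset.sum_eq_zero
      intro m hm
      rw [mem_simplex] at hm
      have hcode : fockCode N α j (fun k => m k + r' k) = 0 := by
        rw [code_apply, if_neg]
        rw [mem_simplex, Finset.sum_add_distrib]
        omega
      show _ * (_ * fockCode N α j (fun k => m k + r' k)) = 0
      rw [hcode, mul_zero, mul_zero]
    exact ⟨fun i j _ => hzero i j, fun i j => by rw [hzero i i, hzero j j]⟩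
  -- main case: equal weights S' = S
  set Cst : ℝ := γ ^ S * (1 - γ) ^ (N - S) * ((N.choose S : ℕ) : ℝ)
      * Real.sqrt ((multinat r : ℝ) * (multinat r' : ℝ)) with hCst
  set D : (Fin q → ℕ) → ℝ := fun m =>
    Real.sqrt ((multinat (fun k => m k + r k) : ℝ) * (multinat (fun k => m k + r' k) : ℝ))
    with hD
  set W : Fin K → (Fin q → ℕ) → ℂ := fun j n =>
    ∑ d ∈ simplex q (t - S), ((multinat d : ℕ) : ℂ) *
      (α j (fun k => n k - (r k + d k) + (r' k + d k))
        * ((klCoeff n (fun k => r k + d k) (fun k => r' k + d k) : ℝ) : ℂ)) with hW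
  -- pointwise evaluation of W at shifted points
  have hWval : ∀ (j : Fin K) (m : Fin q → ℕ), (∑ k, m k) = N - S →
      W j (fun k => m k + r k)
        = (((multinat m : ℝ) / D m : ℝ) : ℂ) * α j (fun k => m k + r' k) := by
    intro j m hm
    have hterm : ∀ d ∈ simplex q (t - S),
        ((multinat d : ℕ) : ℂ) *
          (α j (fun k => (m k + r k) - (r k + d k) + (r' k + d k))
            * ((klCoeff (fun k => m k + r k) (fun k => r k + d k)
                (fun k => r' k + d k) : ℝ) : ℂ))
        = ((((multinat d * multZ (fun k => (m k : ℤ) - d k) : ℕ) : ℝ) / D m : ℝ) : ℂ)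
            * α j (fun k => m k + r' k) := by
      intro d _
      have hnum : (fun k => ((fun k => m k + r k) k : ℤ) - ((fun k => r k + d k) k : ℤ))
          = fun k => (m k : ℤ) - d k := by
        funext k
        push_cast
        ring
      by_cases hd : ∀ k, d k ≤ m k
      · have hidx : (fun k => (m k + r k) - (r k + d k) + (r' k + d k))
            = fun k => m k + r' k := by
          funext k
          have := hd k
          omega
        have hkl : klCoeff (fun k => m k + r k) (fun k => r k + d k) (fun k => r' k + d k)
            = (multZ (fun k => (m k : ℤ) - d k) : ℝ) / D m := by
          rw [klCoeff, hnum, hD]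
          rw [hidx]
        rw [hidx, hkl]
        push_cast
        ring
      · have h0 : multZ (fun k => (m k : ℤ) - d k) = 0 := multZ_eq_zero hd
        have hkl : klCoeff (fun k => m k + r k) (fun k => r k + d k) (fun k => r' k + d k)
            = 0 := by
          rw [klCoeff, hnum, h0]
          simp
        rw [hkl, h0]
        simp
    simp only [hW]
    rw [Finset.sum_congr rfl hterm]
    rw [← Finset.sum_mul]
    congr 1
    rw [← Complex.ofReal_sum]
    congr 1
    rw [← Finset.sum_div]
    congr 1
    rw [← Nat.cast_sum]
    have hts : t - S ≤ ∑ k, m k := by omega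
    rw [vand2 m (t - S) hts]
  -- pointwise evaluation of the squared prefactor
  have hPfull : ∀ m : Fin q → ℕ, (∑ k, m k) = N - S →
      (∏ k, Real.sqrt ((1-γ)^(m k) * γ^(r k) * ((m k + r k).choose (r k) : ℝ)))
        * (∏ k, Real.sqrt ((1-γ)^(m k) * γ^(r' k) * ((m k + r' k).choose (r' k) : ℝ)))
      = Cst * ((multinat m : ℝ) / D m) := by
    intro m hm
    rw [pfac_mul hγ0 hγ1 m r r' (by rw [← hSdef, ← hS'def, hS']), ← hSdef, hm]
    have : N - S + S = N := by omega
    rw [this, hCst, hD]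
    ring
  -- the main reduction
  have main : ∀ i j : Fin K,
      finner (ampDamp γ r (fockCode N α i)) (ampDamp γ r' (fockCode N α j))
        = (Cst : ℂ) * ∑ n ∈ simplex q N, (starRingEnd ℂ) (α i n) * W j n := by
    intro i j
    rw [key_supp i j]
    -- restrict the G-sum to the filter where r ≤ n
    have hfil : ∑ n ∈ (simplex q N).filter (fun n => ∀ k, r k ≤ n k),
        (starRingEnd ℂ) (α i n) * W j n
        = ∑ n ∈ simplex q N, (starRingEnd ℂ) (α i n) * W j n := by
      apply Finset.sum_filter_of_ne
      intro n _ hne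
      by_contra hc
      apply hne
      have hWz : W j n = 0 := by
        simp only [hW]
        apply Finset.sum_eq_zero
        intro d _
        have : multZ (fun k => (n k : ℤ) - ((fun k => r k + d k) k : ℤ)) = 0 := by
          rw [multZ, if_neg]
          push_neg at hc ⊢
          obtain ⟨k, hk⟩ := hc
          exact ⟨k, by push_cast; omega⟩
        rw [klCoeff, this]
        simp
      rw [hWz, mul_zero]
    rw [← hfil]
    rw [Finset.mul_sum]
    apply Finset.sum_nbij' (fun m => fun k => m k + r k) (fun n => fun k => n k - r k)
    · intro m hm
      rw [mem_simplex] at hm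
      rw [Finset.mem_filter, mem_simplex]
      constructor
      · show ∑ k, (m k + r k) = N
        rw [Finset.sum_add_distrib]
        omega
      · intro k
        show r k ≤ m k + r k
        omega
    · intro n hn
      rw [Finset.mem_filter, mem_simplex] at hn
      rw [mem_simplex]
      obtain ⟨h1, h2⟩ := hn
      show ∑ k, (n k - r k) = N - S
      have : ∑ k, (n k - r k) + ∑ k, r k = ∑ k, n k := by
        rw [← Finset.sum_add_distrib]
        exact Finset.sum_congr rfl fun k _ => by have := h2 k; omega
      omega
    · intro m _
      funext k
      show m k + r k - r k = m k
      omega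
    · intro n hn
      rw [Finset.mem_filter] at hn
      funext k
      have := hn.2 k
      show n k - r k + r k = n k
      omega
    · intro m hm
      rw [mem_simplex] at hm
      -- LHS summand = Cst * (conj (α i (m+r)) * W j (m+r))
      have hmem1 : (fun k => m k + r k) ∈ simplex q N := by
        rw [mem_simplex, Finset.sum_add_distrib]
        omega
      have hmem2 : (fun k => m k + r' k) ∈ simplex q N := by
        rw [mem_simplex, Finset.sum_add_distrib, ← hS'def, hS']
        omega
      show (starRingEnd ℂ) (ampDamp γ r (fockCode N α i) m)
          * ampDamp γ r' (fockCode N α j) m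
          = (Cst : ℂ) * ((starRingEnd ℂ) (α i (fun k => m k + r k))
              * W j (fun k => m k + r k))
      rw [hWval j m hm]
      show (starRingEnd ℂ) ((((∏ k, Real.sqrt ((1 - γ) ^ (m k) * γ ^ (r k)
            * ((m k + r k).choose (r k) : ℝ))) : ℝ) : ℂ)
            * fockCode N α i (fun k => m k + r k))
          * ((((∏ k, Real.sqrt ((1 - γ) ^ (m k) * γ ^ (r' k)
            * ((m k + r' k).choose (r' k) : ℝ))) : ℝ) : ℂ)
            * fockCode N α j (fun k => m k + r' k)) = _
      rw [code_apply i _, code_apply j _, if_pos hmem1, if_pos hmem2,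
        map_mul, Complex.conj_ofReal]
      have := hPfull m hm
      calc ((∏ k, Real.sqrt ((1 - γ) ^ (m k) * γ ^ (r k)
            * ((m k + r k).choose (r k) : ℝ)) : ℝ) : ℂ)
            * (starRingEnd ℂ) (α i (fun k => m k + r k))
            * (((∏ k, Real.sqrt ((1 - γ) ^ (m k) * γ ^ (r' k)
              * ((m k + r' k).choose (r' k) : ℝ)) : ℝ) : ℂ)
              * α j (fun k => m k + r' k))
          = ((((∏ k, Real.sqrt ((1 - γ) ^ (m k) * γ ^ (r k)
              * ((m k + r k).choose (r k) : ℝ)))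
              * (∏ k, Real.sqrt ((1 - γ) ^ (m k) * γ ^ (r' k)
              * ((m k + r' k).choose (r' k) : ℝ))) : ℝ) : ℂ))
            * ((starRingEnd ℂ) (α i (fun k => m k + r k))
              * α j (fun k => m k + r' k)) := by
            push_cast
            ring
        _ = _ := by
            rw [this]
            push_cast
            ring
  -- rewrite the W-sum as a combination of C3/C4-type sums
  have hGsum : ∀ i j : Fin K,
      ∑ n ∈ simplex q N, (starRingEnd ℂ) (α i n) * W j n
        = ∑ d ∈ simplex q (t - S), ((multinat d : ℕ) : ℂ) *
            ∑ n ∈ simplex q N,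
              (starRingEnd ℂ) (α i n) * α j (fun k => n k - (r k + d k) + (r' k + d k))
                * ((klCoeff n (fun k => r k + d k) (fun k => r' k + d k) : ℝ) : ℂ) := by
    intro i j
    simp only [hW]
    simp only [Finset.mul_sum]
    rw [Finset.sum_comm]
    refine Finset.sum_congr rfl fun d _ => Finset.sum_congr rfl fun n _ => by ring
  have hmemE : ∀ d ∈ simplex q (t - S), (fun k => r k + d k) ∈ simplex q t := by
    intro d hd
    rw [mem_simplex] at hd ⊢
    rw [Finset.sum_add_distrib, ← hSdef, hd]
    omega
  have hmemF : ∀ d ∈ simplex q (t - S), (fun k => r' k + d k) ∈ simplex q t := by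
    intro d hd
    rw [mem_simplex] at hd ⊢
    rw [Finset.sum_add_distrib, ← hS'def, hS', hd]
    omega
  constructor
  · intro i j hij
    rw [main i j, hGsum i j]
    rw [Finset.sum_eq_zero, mul_zero]
    intro d hd
    rw [hC3 i j hij _ (hmemE d hd) _ (hmemF d hd), mul_zero]
  · intro i j
    by_cases hij : i = j
    · rw [hij]
    · rw [main i i, main j j, hGsum i i, hGsum j j]
      congr 1
      rw [← sub_eq_zero, ← Finset.sum_sub_distrib]
      apply Finset.sum_eq_zero
      intro d hd
      rw [← mul_sub, ← Finset.sum_sub_distrib]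
      have h4 := hC4 i j hij _ (hmemE d hd) _ (hmemF d hd)
      rw [show ∑ n ∈ simplex q N,
            ((starRingEnd ℂ) (α i n) * α i (fun k => n k - (r k + d k) + (r' k + d k))
              * ((klCoeff n (fun k => r k + d k) (fun k => r' k + d k) : ℝ) : ℂ)
            - (starRingEnd ℂ) (α j n) * α j (fun k => n k - (r k + d k) + (r' k + d k))
              * ((klCoeff n (fun k => r k + d k) (fun k => r' k + d k) : ℝ) : ℂ))
          = ∑ n ∈ simplex q N,
            ((starRingEnd ℂ) (α i n) * α i (fun k => n k - (r k + d k) + (r' k + d k))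
              - (starRingEnd ℂ) (α j n) * α j (fun k => n k - (r k + d k) + (r' k + d k)))
              * ((klCoeff n (fun k => r k + d k) (fun k => r' k + d k) : ℝ) : ℂ)
        from Finset.sum_congr rfl fun n _ => by ring, h4, mul_zero]
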